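/- Let V be a real inner product space, let E₁, E₂ : V → ℝ, and let g₁, g₂ : V → V satisfy the subgradient (convexity) inequalities E₁(y) ≥ E₁(x) + ⟪g₁(x), y − x⟫ and E₂(y) ≥ E₂(x) + ⟪g₂(x), y − x⟫ for all x, y ∈ V. Let τ > 0 and suppose u, u′ ∈ V satisfy the semi-implicit convexity splitting step u′ = u − τ (g₁(u′) − g₂(u)). Then the energy E = E₁ − E₂ is non-increasing over the step: E₁(u′) − E₂(u′) ≤ E₁(u) − E₂(u). Moreover, E₁(u′) − E₂(u′) ≤ E₁(u) − E₂(u) − ‖u′ − u‖²/τ. -/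
import Mathlib


open RealInnerProductSpace

/-- Unconditional energy stability of Eyre's convexity splitting scheme: if `E₁, E₂` are
convex with (sub)gradients `g₁, g₂` and `u' = u − τ (g₁ u' − g₂ u)` with `τ > 0`, then the
energy `E = E₁ − E₂` does not increase over the step, and in fact decreases by at least
`‖u' − u‖²/τ`. -/
theorem convexity_splitting_energy_stable
    {V : Type*} [NormedAddCommGroup V] [InnerProductSpace ℝ V]
    (E₁ E₂ : V → ℝ) (g₁ g₂ : V → V)
    (h1 : ∀ x y : V, E₁ x + ⟪g₁ x, y - x⟫ ≤ E₁ y)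
    (h2 : ∀ x y : V, E₂ x + ⟪g₂ x, y - x⟫ ≤ E₂ y)
    (τ : ℝ) (hτ : 0 < τ) (u u' : V)
    (hstep : u' = u - τ • (g₁ u' - g₂ u)) :
    E₁ u' - E₂ u' ≤ E₁ u - E₂ u ∧
      E₁ u' - E₂ u' ≤ E₁ u - E₂ u - ‖u' - u‖ ^ 2 / τ := by
  have hg : g₁ u' - g₂ u = τ⁻¹ • (u - u') := by
    have h : u - u' = τ • (g₁ u' - g₂ u) := by
      conv_lhs => rw [hstep]
      abel
    rw [h, smul_smul, inv_mul_cancel₀ hτ.ne', one_smul]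
  have hA := h1 u' u
  have hB := h2 u u'
  have hinner : ⟪g₁ u', u - u'⟫ + ⟪g₂ u, u' - u⟫ = ‖u' - u‖ ^ 2 / τ := by
    have e1 : (u' : V) - u = -(u - u') := by abel
    rw [e1, inner_neg_right, ← sub_eq_add_neg, ← inner_sub_left, hg,
      real_inner_smul_left, real_inner_self_eq_norm_sq]
    rw [norm_neg, norm_sub_rev u u']
    ring
  have hpos : 0 ≤ ‖u' - u‖ ^ 2 / τ := div_nonneg (sq_nonneg _) hτ.le
  constructor <;> linarith
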